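/- Let K be a small monoidal triangulated category with associated big M∆C K̂, and let I_1 and I_2 be thick ideals of K. Then: (a) for all objects A, B of K, the object L_{I_1}(A) ⊗ L_{I_2}(B) lies in ⟨I_1, I_2⟩^⊥, i.e. Hom_{K̂}(C, L_{I_1}(A) ⊗ L_{I_2}(B)) = 0 for all C in the thick ideal ⟨I_1, I_2⟩ generated by I_1 and I_2; (b) if I_1 and I_2 are coprime, then L_{I_1}(A) ⊗ L_{I_2}(B) ≅ 0 for all objects A and B of K̂. -/

import Mathlib

set_option linter.unusedSectionVars false

open CategoryTheory Category Limits Pretriangulated ZeroObject MonoidalCategory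

universe w v u v' u' v2 u2

namespace NVY

section SmallDefs

variable (C : Type u) [Category.{v} C] [HasZeroObject C] [Preadditive C] [HasShift C ℤ]
  [∀ n : ℤ, (shiftFunctor C n).Additive] [Pretriangulated C] [MonoidalCategory C]

/-- A thick (triangulated, summand-closed) subcategory of `C`, given by its set of objects. -/
structure ThickSubcat where
  carrier : Set C
  zero_mem : (0 : C) ∈ carrier
  iso_closed : ∀ {A B : C}, (A ≅ B) → A ∈ carrier → B ∈ carrier
  shift_mem : ∀ (A : C) (n : ℤ), A ∈ carrier → (A⟦n⟧ : C) ∈ carrier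
  ext₂ : ∀ T ∈ distTriang C, T.obj₁ ∈ carrier → T.obj₃ ∈ carrier → T.obj₂ ∈ carrier
  summand_mem : ∀ (A X : C) (s : A ⟶ X) (r : X ⟶ A), s ≫ r = 𝟙 A → X ∈ carrier → A ∈ carrier

/-- A (two-sided) thick ideal of a monoidal triangulated category, given by its set of objects. -/
structure ThickIdeal where
  carrier : Set C
  zero_mem : (0 : C) ∈ carrier
  iso_closed : ∀ {A B : C}, (A ≅ B) → A ∈ carrier → B ∈ carrier
  shift_mem : ∀ (A : C) (n : ℤ), A ∈ carrier → (A⟦n⟧ : C) ∈ carrier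
  ext₂ : ∀ T ∈ distTriang C, T.obj₁ ∈ carrier → T.obj₃ ∈ carrier → T.obj₂ ∈ carrier
  summand_mem : ∀ (A X : C) (s : A ⟶ X) (r : X ⟶ A), s ≫ r = 𝟙 A → X ∈ carrier → A ∈ carrier
  tensor_right_mem : ∀ (A B : C), A ∈ carrier → (A ⊗ B) ∈ carrier
  tensor_left_mem : ∀ (A B : C), A ∈ carrier → (B ⊗ A) ∈ carrier

/-- The smallest thick subcategory containing a set `S` of objects. -/
def thickSubcatGenerated (S : Set C) : ThickSubcat C where
  carrier := {A : C | ∀ T : ThickSubcat C, S ⊆ T.carrier → A ∈ T.carrier}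
  zero_mem := fun T _ => T.zero_mem
  iso_closed := fun e hA T hS => T.iso_closed e (hA T hS)
  shift_mem := fun A n hA T hS => T.shift_mem A n (hA T hS)
  ext₂ := fun T hT h1 h3 I hS => I.ext₂ T hT (h1 I hS) (h3 I hS)
  summand_mem := fun A X s r hsr hX T hS => T.summand_mem A X s r hsr (hX T hS)

/-- The smallest thick ideal containing a set `S` of objects, `⟨S⟩`. -/
def thickIdealGenerated (S : Set C) : ThickIdeal C where
  carrier := {A : C | ∀ I : ThickIdeal C, S ⊆ I.carrier → A ∈ I.carrier}
  zero_mem := fun I _ => I.zero_mem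
  iso_closed := fun e hA I hS => I.iso_closed e (hA I hS)
  shift_mem := fun A n hA I hS => I.shift_mem A n (hA I hS)
  ext₂ := fun T hT h1 h3 I hS => I.ext₂ T hT (h1 I hS) (h3 I hS)
  summand_mem := fun A X s r hsr hX I hS => I.summand_mem A X s r hsr (hX I hS)
  tensor_right_mem := fun A B hA I hS => I.tensor_right_mem A B (hA I hS)
  tensor_left_mem := fun A B hA I hS => I.tensor_left_mem A B (hA I hS)

/-- `G` generates `C` as a thick subcategory. -/
def GeneratesThick (G : C) : Prop :=
  ∀ T : ThickSubcat C, G ∈ T.carrier → ∀ A : C, A ∈ T.carrier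

variable {C}

/-- A thick ideal is proper if it is not all of `C`. -/
def ThickIdeal.IsProper (I : ThickIdeal C) : Prop := I.carrier ≠ Set.univ

/-- The intersection of two thick ideals. -/
def ThickIdeal.inter (I J : ThickIdeal C) : ThickIdeal C where
  carrier := I.carrier ∩ J.carrier
  zero_mem := ⟨I.zero_mem, J.zero_mem⟩
  iso_closed := fun e hA => ⟨I.iso_closed e hA.1, J.iso_closed e hA.2⟩
  shift_mem := fun A n hA => ⟨I.shift_mem A n hA.1, J.shift_mem A n hA.2⟩
  ext₂ := fun T hT h1 h3 => ⟨I.ext₂ T hT h1.1 h3.1, J.ext₂ T hT h1.2 h3.2⟩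
  summand_mem := fun A X s r hsr hX =>
    ⟨I.summand_mem A X s r hsr hX.1, J.summand_mem A X s r hsr hX.2⟩
  tensor_right_mem := fun A B hA => ⟨I.tensor_right_mem A B hA.1, J.tensor_right_mem A B hA.2⟩
  tensor_left_mem := fun A B hA => ⟨I.tensor_left_mem A B hA.1, J.tensor_left_mem A B hA.2⟩

/-- The intersection of a family of thick ideals. -/
def idealInter {ι : Type w} (I : ι → ThickIdeal C) : ThickIdeal C where
  carrier := {A : C | ∀ i : ι, A ∈ (I i).carrier}
  zero_mem := fun i => (I i).zero_mem
  iso_closed := fun e hA i => (I i).iso_closed e (hA i)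
  shift_mem := fun A n hA i => (I i).shift_mem A n (hA i)
  ext₂ := fun T hT h1 h3 i => (I i).ext₂ T hT (h1 i) (h3 i)
  summand_mem := fun A X s r hsr hX i => (I i).summand_mem A X s r hsr (hX i)
  tensor_right_mem := fun A B hA i => (I i).tensor_right_mem A B (hA i)
  tensor_left_mem := fun A B hA i => (I i).tensor_left_mem A B (hA i)

variable (C)

/-- Two thick ideals are coprime if together they generate the whole category. -/
def Coprime (I J : ThickIdeal C) : Prop :=
  (thickIdealGenerated C (I.carrier ∪ J.carrier)).carrier = Set.univ

/-- A proper thick ideal `P` is prime if `I ⊗ J ⊆ P` implies `I ⊆ P` or `J ⊆ P`. -/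
def IsPrime (P : ThickIdeal C) : Prop :=
  P.carrier ≠ Set.univ ∧
    ∀ I J : ThickIdeal C, (∀ A ∈ I.carrier, ∀ B ∈ J.carrier, (A ⊗ B) ∈ P.carrier) →
      I.carrier ⊆ P.carrier ∨ J.carrier ⊆ P.carrier

/-- A proper thick ideal `P` is completely prime if `A ⊗ B ∈ P` implies `A ∈ P` or `B ∈ P`. -/
def IsCompletelyPrime (P : ThickIdeal C) : Prop :=
  P.carrier ≠ Set.univ ∧ ∀ A B : C, (A ⊗ B) ∈ P.carrier → A ∈ P.carrier ∨ B ∈ P.carrier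

/-- A maximal (proper) thick ideal. -/
def IsMaximal (M : ThickIdeal C) : Prop :=
  M.carrier ≠ Set.univ ∧
    ∀ I : ThickIdeal C, I.carrier ≠ Set.univ → M.carrier ⊆ I.carrier → I.carrier = M.carrier

/-- A thick ideal is semiprime if it is an intersection of prime thick ideals. -/
def IsSemiprime (I : ThickIdeal C) : Prop :=
  ∃ S : Set (ThickIdeal C), (∀ P ∈ S, IsPrime C P) ∧
    I.carrier = {A : C | ∀ P ∈ S, A ∈ P.carrier}

/-- The noncommutative Balmer spectrum: the set of prime thick ideals. -/
def Spc := {P : ThickIdeal C // IsPrime C P}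

/-- The Zariski topology on the Balmer spectrum: generated by the closed sets
`V(A) = {P : A ∉ P}`, i.e. by the open sets `{P : A ∈ P}`. -/
instance : TopologicalSpace (Spc C) :=
  TopologicalSpace.generateFrom {U : Set (Spc C) | ∃ A : C, U = {P : Spc C | A ∈ P.1.carrier}}

/-- The universal support of an object. -/
def V (A : C) : Set (Spc C) := {P : Spc C | A ∉ P.1.carrier}

/-- The support of a thick ideal: `Φ(I) = ⋃_{A ∈ I} V(A)`. -/
def supp (I : ThickIdeal C) : Set (Spc C) := ⋃ A ∈ I.carrier, V C A

/-- The prime radical: the intersection of all prime thick ideals. -/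
def primeRadical : Set C := {A : C | ∀ P : ThickIdeal C, IsPrime C P → A ∈ P.carrier}

/-- The completely prime radical: the intersection of all completely prime thick ideals. -/
def cpRadical : Set C := {A : C | ∀ P : ThickIdeal C, IsCompletelyPrime C P → A ∈ P.carrier}

/-- Tensor powers of an object. -/
def tpow (A : C) : ℕ → C
  | 0 => 𝟙_ C
  | n + 1 => tpow A n ⊗ A

/-- The set of ⊗-nilpotent objects. -/
def nilpotents : Set C := {A : C | ∃ n : ℕ, IsZero (tpow C A n)}

/-- The ideal `Θ(S)`: the intersection of the primes not belonging to `S`. -/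
def thetaIdeal (S : Set (Spc C)) : ThickIdeal C where
  carrier := {A : C | ∀ P : Spc C, P ∉ S → A ∈ P.1.carrier}
  zero_mem := fun P _ => P.1.zero_mem
  iso_closed := fun e hA P hP => P.1.iso_closed e (hA P hP)
  shift_mem := fun A n hA P hP => P.1.shift_mem A n (hA P hP)
  ext₂ := fun T hT h1 h3 P hP => P.1.ext₂ T hT (h1 P hP) (h3 P hP)
  summand_mem := fun A X s r hsr hX P hP => P.1.summand_mem A X s r hsr (hX P hP)
  tensor_right_mem := fun A B hA P hP => P.1.tensor_right_mem A B (hA P hP)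
  tensor_left_mem := fun A B hA P hP => P.1.tensor_left_mem A B (hA P hP)

/-- A Thomason subset: a union of closed subsets with quasicompact complements. -/
def IsThomason (S : Set (Spc C)) : Prop :=
  ∃ 𝒵 : Set (Set (Spc C)), (∀ Z ∈ 𝒵, IsClosed Z ∧ IsCompact Zᶜ) ∧ S = ⋃₀ 𝒵

/-- The class of morphisms whose cone lies in the set `S`: inverting these gives the
Verdier quotient by the (thick) subcategory with objects `S`. -/
def coneW (S : Set C) : MorphismProperty C := fun X Y f =>
  ∃ (Z : C) (g : Y ⟶ Z) (h : Z ⟶ (X⟦(1 : ℤ)⟧ : C)),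
    (Triangle.mk f g h ∈ distTriang C) ∧ Z ∈ S

variable {C} in
/-- The product `f · g := Σⁿ(f) ∘ g` on the (Tate) extended endomorphism ring
`⊕ₙ Hom(A, ΣⁿA)`. -/
def extMul {A : C} {m n : ℤ} (f : A ⟶ (A⟦m⟧ : C)) (g : A ⟶ (A⟦n⟧ : C)) :
    A ⟶ (A⟦m + n⟧ : C) :=
  g ≫ (shiftFunctor C n).map f ≫ (shiftFunctorAdd C m n).inv.app A

variable {C} in
/-- The identity element, in degree `0`, of the extended endomorphism ring of `A`. -/
def unitEl (A : C) : A ⟶ (A⟦(0 : ℤ)⟧ : C) := (shiftFunctorZero C ℤ).inv.app A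

end SmallDefs

section BigDefs

variable (C : Type u) [Category.{v} C]

/-- An object `X` is compact if `Hom(X, -)` preserves set-indexed coproducts. -/
def IsCompactObj (X : C) : Prop :=
  ∀ ι : Type v, Nonempty
    (PreservesColimitsOfShape (Discrete ι) (coyoneda.obj (Opposite.op X)))

variable [HasZeroObject C] [Preadditive C] [HasShift C ℤ]
  [∀ n : ℤ, (shiftFunctor C n).Additive] [Pretriangulated C] [MonoidalCategory C]

/-- `C` is a compactly generated (big) monoidal triangulated category: it has set-indexed
coproducts preserved by the tensor product in each variable, the unit is compact, compacts
are closed under tensoring and rigid, and the compact objects generate. -/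
structure IsCptGenMDC : Prop where
  hasCoproducts : HasCoproducts.{v} C
  tensorLeft_pres : ∀ (X : C) (ι : Type v),
    Nonempty (PreservesColimitsOfShape (Discrete ι) (tensorLeft X))
  tensorRight_pres : ∀ (X : C) (ι : Type v),
    Nonempty (PreservesColimitsOfShape (Discrete ι) (tensorRight X))
  unit_compact : IsCompactObj C (𝟙_ C)
  tensor_compact : ∀ X Y : C, IsCompactObj C X → IsCompactObj C Y → IsCompactObj C (X ⊗ Y)
  compact_rigid_left : ∀ X : C, IsCompactObj C X → Nonempty (HasLeftDual X)
  compact_rigid_right : ∀ X : C, IsCompactObj C X → Nonempty (HasRightDual X)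
  compactly_generated : ∀ X : C,
    (∀ G : C, IsCompactObj C G → ∀ (n : ℤ) (f : (G⟦n⟧ : C) ⟶ X), f = 0) → IsZero X

/-- A localizing subcategory: a triangulated subcategory closed under set-indexed
coproducts. -/
structure LocalizingSubcat where
  carrier : Set C
  zero_mem : (0 : C) ∈ carrier
  iso_closed : ∀ {A B : C}, (A ≅ B) → A ∈ carrier → B ∈ carrier
  shift_mem : ∀ (A : C) (n : ℤ), A ∈ carrier → (A⟦n⟧ : C) ∈ carrier
  ext₂ : ∀ T ∈ distTriang C, T.obj₁ ∈ carrier → T.obj₃ ∈ carrier → T.obj₂ ∈ carrier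
  coproduct_mem : ∀ {ι : Type v} (Y : ι → C) (c : Cofan Y), IsColimit c →
    (∀ i, Y i ∈ carrier) → c.pt ∈ carrier

/-- `Loc(S)`: the objects of the localizing subcategory generated by `S`. -/
def locSet (S : Set C) : Set C :=
  {A : C | ∀ L : LocalizingSubcat C, S ⊆ L.carrier → A ∈ L.carrier}

/-- `Loc(S)^⊥`: objects receiving no nonzero morphism from `Loc(S)`. -/
def perpSet (S : Set C) : Set C :=
  {A : C | ∀ B ∈ locSet C S, ∀ f : B ⟶ A, f = 0}

/-- The localization/colocalization data associated to `S ⊆ C`: for each object `A`,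
a distinguished triangle `Γ(A) → A → L(A) → ΣΓ(A)` with `Γ(A) ∈ Loc(S)` and
`L(A) ∈ Loc(S)^⊥`. -/
structure LocalizationData (S : Set C) where
  Γ : C → C
  L : C → C
  Γ_mem : ∀ A : C, Γ A ∈ locSet C S
  L_mem : ∀ A : C, L A ∈ perpSet C S
  α : ∀ A : C, Γ A ⟶ A
  β : ∀ A : C, A ⟶ L A
  γ : ∀ A : C, L A ⟶ ((Γ A)⟦(1 : ℤ)⟧ : C)
  dist : ∀ A : C, Triangle.mk (α A) (β A) (γ A) ∈ distTriang C

variable {C}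

/-- The iterated colocalization `Γ_{I_{σ(m)}} ⋯ Γ_{I_{σ(1)}}(𝟙)` of the unit object. -/
def gammaIter {n : ℕ} {S : Fin n → Set C} (LD : ∀ j, LocalizationData C (S j))
    (σ : Equiv.Perm (Fin n)) : ℕ → C
  | 0 => 𝟙_ C
  | m + 1 =>
      if h : m < n then (LD (σ ⟨m, h⟩)).Γ (gammaIter LD σ m) else gammaIter LD σ m

end BigDefs

variable {C : Type u} [Category.{v} C] [HasZeroObject C] [Preadditive C] [HasShift C ℤ]
  [∀ n : ℤ, (shiftFunctor C n).Additive] [Pretriangulated C] [MonoidalCategory C]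
variable {K : Type u'} [Category.{v'} K] [HasZeroObject K] [Preadditive K] [HasShift K ℤ]
  [∀ n : ℤ, (shiftFunctor K n).Additive] [Pretriangulated K] [MonoidalCategory K]
variable (F : K ⥤ C) [F.Full] [F.Faithful] [F.CommShift ℤ] [F.IsTriangulated] [F.Monoidal]


section Proof4Aux

/-- Transport "all morphisms vanish" through a bijection of hom-sets. -/
lemma allZero_equiv {α β : Type*} [Zero α] [Zero β] (e : α ≃ β)
    (h : ∀ b : β, b = 0) (a : α) : a = 0 :=
  e.injective ((h (e a)).trans (h (e 0)).symm)

/-- Tensoring a zero object on the right gives a zero object. -/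
lemma isZero_tensor_right (hC : IsCptGenMDC C) {X : C} (hX : IsZero X) (Y : C) :
    IsZero (X ⊗ Y) := by
  obtain ⟨hp⟩ := hC.tensorRight_pres Y PEmpty.{v+1}
  let c : Cofan (fun x : PEmpty.{v+1} => (x.elim : C)) := Cofan.mk X (fun x => x.elim)
  have hc : IsColimit c := mkCofanColimit c (fun s => 0) (fun s i => i.elim)
    (fun s m _ => hX.eq_of_src m 0)
  have hc' := isColimitOfPreserves (tensorRight Y) hc
  rw [IsZero.iff_id_eq_zero]
  exact hc'.hom_ext (fun j => j.as.elim)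

/-- Tensoring a zero object on the left gives a zero object. -/
lemma isZero_tensor_left (hC : IsCptGenMDC C) {X : C} (hX : IsZero X) (Y : C) :
    IsZero (Y ⊗ X) := by
  obtain ⟨hp⟩ := hC.tensorLeft_pres Y PEmpty.{v+1}
  let c : Cofan (fun x : PEmpty.{v+1} => (x.elim : C)) := Cofan.mk X (fun x => x.elim)
  have hc : IsColimit c := mkCofanColimit c (fun s => 0) (fun s i => i.elim)
    (fun s m _ => hX.eq_of_src m 0)
  have hc' := isColimitOfPreserves (tensorLeft Y) hc
  rw [IsZero.iff_id_eq_zero]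
  exact hc'.hom_ext (fun j => j.as.elim)

/-- The first component of an exact pairing with compact second-tensor-side is compact. -/
lemma isCompact_of_pairing_left (hC : IsCptGenMDC C) (P X : C) [ExactPairing P X] :
    IsCompactObj C P := by
  have iso : coyoneda.obj (Opposite.op P) ≅
      tensorRight X ⋙ coyoneda.obj (Opposite.op (𝟙_ C)) := by
    refine NatIso.ofComponents (fun V => Equiv.toIso
      ((Iso.homCongr (λ_ P).symm (Iso.refl V)).trans (tensorRightHomEquiv (𝟙_ C) P X V))) ?_
    intro V V' g
    ext f
    dsimp
    simp only [Equiv.toIso_hom, Equiv.trans_apply, Iso.homCongr_apply, Iso.symm_inv, Iso.refl_hom, Category.comp_id]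
    rw [← Category.assoc]
    exact tensorRightHomEquiv_naturality ((λ_ P).hom ≫ f) g
  intro ι
  obtain ⟨h1⟩ := hC.tensorRight_pres X ι
  obtain ⟨h2⟩ := hC.unit_compact ι
  exact ⟨preservesColimitsOfShape_of_natIso iso.symm⟩

/-- The second component of an exact pairing with compact first-tensor-side is compact. -/
lemma isCompact_of_pairing_right (hC : IsCptGenMDC C) (X P : C) [ExactPairing X P] :
    IsCompactObj C P := by
  have iso : coyoneda.obj (Opposite.op P) ≅
      tensorLeft X ⋙ coyoneda.obj (Opposite.op (𝟙_ C)) := by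
    refine NatIso.ofComponents (fun V => Equiv.toIso
      ((Iso.homCongr (ρ_ P).symm (Iso.refl V)).trans (tensorLeftHomEquiv (𝟙_ C) X P V))) ?_
    intro V V' g
    ext f
    dsimp
    simp only [Equiv.toIso_hom, Equiv.trans_apply, Iso.homCongr_apply, Iso.symm_inv, Iso.refl_hom, Category.comp_id]
    rw [← Category.assoc]
    exact tensorLeftHomEquiv_naturality ((ρ_ P).hom ≫ f) g
  intro ι
  obtain ⟨h1⟩ := hC.tensorLeft_pres X ι
  obtain ⟨h2⟩ := hC.unit_compact ι
  exact ⟨preservesColimitsOfShape_of_natIso iso.symm⟩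

/-- If an object of `C` is (isomorphic to) a left dual of `F.obj Zm` with `Zm` in a thick
ideal, then any preimage of it under `F` lies in the ideal. -/
lemma mem_of_pairing_left (I : ThickIdeal K) {Zm Z' : K} (hZm : Zm ∈ I.carrier)
    (P : C) [ExactPairing P (F.obj Zm)] (e : F.obj Z' ≅ P) : Z' ∈ I.carrier := by
  have hM : (Z' ⊗ Zm) ⊗ Z' ∈ I.carrier :=
    I.tensor_right_mem _ Z' (I.tensor_left_mem Zm Z' hZm)
  let isoM : F.obj ((Z' ⊗ Zm) ⊗ Z') ≅ (P ⊗ F.obj Zm) ⊗ P :=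
    (Functor.Monoidal.μIso F (Z' ⊗ Zm) Z').symm ≪≫
      tensorIso ((Functor.Monoidal.μIso F Z' Zm).symm ≪≫
        tensorIso e (Iso.refl (F.obj Zm))) e
  let s₀ : P ⟶ (P ⊗ F.obj Zm) ⊗ P := (λ_ P).inv ≫ η_ P (F.obj Zm) ▷ P
  let r₀ : (P ⊗ F.obj Zm) ⊗ P ⟶ P :=
    (α_ P (F.obj Zm) P).hom ≫ P ◁ ε_ P (F.obj Zm) ≫ (ρ_ P).hom
  have hsr₀ : s₀ ≫ r₀ = 𝟙 P := by simp [s₀, r₀]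
  refine I.summand_mem Z' _ (F.preimage (e.hom ≫ s₀ ≫ isoM.inv))
    (F.preimage (isoM.hom ≫ r₀ ≫ e.inv)) ?_ hM
  apply F.map_injective
  rw [F.map_comp, F.map_preimage, F.map_preimage, F.map_id]
  have h2 : s₀ ≫ r₀ ≫ e.inv = e.inv := by rw [← Category.assoc, hsr₀, Category.id_comp]
  simp [h2]

/-- If an object of `C` is (isomorphic to) a right dual of `F.obj Zm` with `Zm` in a thick
ideal, then any preimage of it under `F` lies in the ideal. -/
lemma mem_of_pairing_right (I : ThickIdeal K) {Zm Z' : K} (hZm : Zm ∈ I.carrier)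
    (P : C) [ExactPairing (F.obj Zm) P] (e : F.obj Z' ≅ P) : Z' ∈ I.carrier := by
  have hM : Z' ⊗ (Zm ⊗ Z') ∈ I.carrier :=
    I.tensor_left_mem _ Z' (I.tensor_right_mem Zm Z' hZm)
  let isoM : F.obj (Z' ⊗ (Zm ⊗ Z')) ≅ P ⊗ (F.obj Zm ⊗ P) :=
    (Functor.Monoidal.μIso F Z' (Zm ⊗ Z')).symm ≪≫
      tensorIso e ((Functor.Monoidal.μIso F Zm Z').symm ≪≫
        tensorIso (Iso.refl (F.obj Zm)) e)
  let s₀ : P ⟶ P ⊗ (F.obj Zm ⊗ P) := (ρ_ P).inv ≫ P ◁ η_ (F.obj Zm) P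
  let r₀ : P ⊗ (F.obj Zm ⊗ P) ⟶ P :=
    (α_ P (F.obj Zm) P).inv ≫ ε_ (F.obj Zm) P ▷ P ≫ (λ_ P).hom
  have hsr₀ : s₀ ≫ r₀ = 𝟙 P := by simp [s₀, r₀]
  refine I.summand_mem Z' _ (F.preimage (e.hom ≫ s₀ ≫ isoM.inv))
    (F.preimage (isoM.hom ≫ r₀ ≫ e.inv)) ?_ hM
  apply F.map_injective
  rw [F.map_comp, F.map_preimage, F.map_preimage, F.map_id]
  have h2 : s₀ ≫ r₀ ≫ e.inv = e.inv := by rw [← Category.assoc, hsr₀, Category.id_comp]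
  simp [h2]

/-- An object receiving no nonzero map from any `F.obj B` is zero. -/
lemma isZero_of_allZero (hC : IsCptGenMDC C) (hF : ∀ X : C, F.essImage X ↔ IsCompactObj C X)
    {X : C} (h : ∀ B : K, ∀ f : F.obj B ⟶ X, f = 0) : IsZero X := by
  apply hC.compactly_generated
  intro G hG n f
  obtain ⟨B, ⟨e⟩⟩ := (hF G).mpr hG
  have e' : ((G⟦n⟧ : C)) ≅ F.obj (B⟦n⟧) :=
    (shiftFunctor C n).mapIso e.symm ≪≫ ((F.commShiftIso n).app B).symm
  have h0 : e'.inv ≫ f = 0 := h _ _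
  calc f = e'.hom ≫ (e'.inv ≫ f) := by simp
  _ = 0 := by rw [h0, comp_zero]

/-- Key vanishing: a member of an ideal tensored (on the left) with an object orthogonal
to the ideal is zero. -/
lemma isZero_obj_tensor (hC : IsCptGenMDC C) (hF : ∀ X : C, F.essImage X ↔ IsCompactObj C X)
    (I : ThickIdeal K) {V : C}
    (hV : ∀ Z ∈ I.carrier, ∀ f : F.obj Z ⟶ V, f = 0) {Z₀ : K} (hZ₀ : Z₀ ∈ I.carrier) :
    IsZero (F.obj Z₀ ⊗ V) := by
  apply isZero_of_allZero F hC hF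
  intro B f
  obtain ⟨hd⟩ := hC.compact_rigid_right (F.obj Z₀) ((hF _).mp (F.obj_mem_essImage Z₀))
  letI := hd
  obtain ⟨Z₁, ⟨e₁⟩⟩ := (hF _).mpr (isCompact_of_pairing_right hC (F.obj Z₀) ((F.obj Z₀)ᘁ))
  have hZ₁ : Z₁ ∈ I.carrier := mem_of_pairing_right F I hZ₀ _ e₁
  have iso2 : (((F.obj Z₀)ᘁ : C)) ⊗ F.obj B ≅ F.obj (Z₁ ⊗ B) :=
    tensorIso e₁.symm (Iso.refl _) ≪≫ Functor.Monoidal.μIso F Z₁ B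
  exact allZero_equiv ((tensorLeftHomEquiv (F.obj B) (F.obj Z₀) ((F.obj Z₀)ᘁ) V).symm.trans
    (iso2.homCongr (Iso.refl V))) (hV _ (I.tensor_right_mem Z₁ B hZ₁)) f

/-- Key vanishing, mirror version. -/
lemma isZero_tensor_obj (hC : IsCptGenMDC C) (hF : ∀ X : C, F.essImage X ↔ IsCompactObj C X)
    (I : ThickIdeal K) {V : C}
    (hV : ∀ Z ∈ I.carrier, ∀ f : F.obj Z ⟶ V, f = 0) {Z₀ : K} (hZ₀ : Z₀ ∈ I.carrier) :
    IsZero (V ⊗ F.obj Z₀) := by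
  apply isZero_of_allZero F hC hF
  intro B f
  obtain ⟨hd⟩ := hC.compact_rigid_left (F.obj Z₀) ((hF _).mp (F.obj_mem_essImage Z₀))
  letI := hd
  obtain ⟨Z₁, ⟨e₁⟩⟩ := (hF _).mpr (isCompact_of_pairing_left hC (ᘁ(F.obj Z₀) : C) (F.obj Z₀))
  have hZ₁ : Z₁ ∈ I.carrier := mem_of_pairing_left F I hZ₀ _ e₁
  have iso2 : F.obj B ⊗ ((ᘁ(F.obj Z₀) : C)) ≅ F.obj (B ⊗ Z₁) :=
    tensorIso (Iso.refl _) e₁.symm ≪≫ Functor.Monoidal.μIso F B Z₁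
  exact allZero_equiv ((tensorRightHomEquiv (F.obj B) (ᘁ(F.obj Z₀) : C) (F.obj Z₀) V).symm.trans
    (iso2.homCongr (Iso.refl V))) (hV _ (I.tensor_left_mem Z₁ B hZ₁)) f

/-- Base case: maps from the ideal into `V₁ ⊗ V₂` vanish when `V₁` is orthogonal. -/
lemma base_left (hC : IsCptGenMDC C) (hF : ∀ X : C, F.essImage X ↔ IsCompactObj C X)
    (I : ThickIdeal K) {V₁ : C}
    (h₁ : ∀ Z ∈ I.carrier, ∀ f : F.obj Z ⟶ V₁, f = 0) (V₂ : C) :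
    ∀ Z ∈ I.carrier, ∀ f : F.obj Z ⟶ V₁ ⊗ V₂, f = 0 := by
  intro Z hZ f
  obtain ⟨hd⟩ := hC.compact_rigid_left (F.obj Z) ((hF _).mp (F.obj_mem_essImage Z))
  letI := hd
  obtain ⟨Z₁, ⟨e₁⟩⟩ := (hF _).mpr (isCompact_of_pairing_left hC (ᘁ(F.obj Z) : C) (F.obj Z))
  have hZ₁ : Z₁ ∈ I.carrier := mem_of_pairing_left F I hZ _ e₁
  have h0 : IsZero ((ᘁ(F.obj Z) : C) ⊗ V₁) :=
    (isZero_obj_tensor F hC hF I h₁ hZ₁).of_iso (tensorIso e₁.symm (Iso.refl V₁))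
  have hzero : IsZero ((ᘁ(F.obj Z) : C) ⊗ (V₁ ⊗ V₂)) :=
    (isZero_tensor_right hC h0 V₂).of_iso (α_ _ V₁ V₂).symm
  exact allZero_equiv ((Iso.homCongr (ρ_ (F.obj Z)).symm (Iso.refl (V₁ ⊗ V₂))).trans
    (tensorLeftHomEquiv (𝟙_ C) (ᘁ(F.obj Z) : C) (F.obj Z) (V₁ ⊗ V₂)))
    (fun b => hzero.eq_of_tgt b 0) f

/-- Base case, mirror: maps from the ideal into `V₁ ⊗ V₂` vanish when `V₂` is orthogonal. -/
lemma base_right (hC : IsCptGenMDC C) (hF : ∀ X : C, F.essImage X ↔ IsCompactObj C X)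
    (I : ThickIdeal K) {V₂ : C}
    (h₂ : ∀ Z ∈ I.carrier, ∀ f : F.obj Z ⟶ V₂, f = 0) (V₁ : C) :
    ∀ Z ∈ I.carrier, ∀ f : F.obj Z ⟶ V₁ ⊗ V₂, f = 0 := by
  intro Z hZ f
  obtain ⟨hd⟩ := hC.compact_rigid_right (F.obj Z) ((hF _).mp (F.obj_mem_essImage Z))
  letI := hd
  obtain ⟨Z₁, ⟨e₁⟩⟩ := (hF _).mpr (isCompact_of_pairing_right hC (F.obj Z) ((F.obj Z)ᘁ))
  have hZ₁ : Z₁ ∈ I.carrier := mem_of_pairing_right F I hZ _ e₁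
  have h0 : IsZero (V₂ ⊗ ((F.obj Z)ᘁ : C)) :=
    (isZero_tensor_obj F hC hF I h₂ hZ₁).of_iso (tensorIso (Iso.refl V₂) e₁.symm)
  have hzero : IsZero ((V₁ ⊗ V₂) ⊗ ((F.obj Z)ᘁ : C)) :=
    (isZero_tensor_left hC h0 V₁).of_iso (α_ V₁ V₂ _)
  exact allZero_equiv ((Iso.homCongr (λ_ (F.obj Z)).symm (Iso.refl (V₁ ⊗ V₂))).trans
    (tensorRightHomEquiv (𝟙_ C) (F.obj Z) ((F.obj Z)ᘁ) (V₁ ⊗ V₂)))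
    (fun b => hzero.eq_of_tgt b 0) f

/-- Shift step. -/
lemma step_shift (I : ThickIdeal K) {V : C} (n : ℤ)
    (hIH : ∀ Z ∈ I.carrier, ∀ f : F.obj Z ⟶ V, f = 0) :
    ∀ Z ∈ I.carrier, ∀ f : F.obj Z ⟶ (V⟦n⟧ : C), f = 0 := by
  intro Z hZ
  have e1 : (F.obj Z ⟶ (V⟦n⟧ : C)) ≃ (((F.obj Z)⟦-n⟧ : C) ⟶ V) :=
    ((shiftEquiv' C (-n) n (neg_add_cancel n)).toAdjunction.homEquiv (F.obj Z) V).symm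
  have e2 : (((F.obj Z)⟦-n⟧ : C) ⟶ V) ≃ (F.obj (Z⟦-n⟧) ⟶ V) :=
    Iso.homCongr ((F.commShiftIso (-n)).app Z).symm (Iso.refl V)
  exact allZero_equiv (e1.trans e2) (hIH _ (I.shift_mem Z (-n) hZ))

/-- Right tensor step. -/
lemma step_tensorRight (hC : IsCptGenMDC C) (hF : ∀ X : C, F.essImage X ↔ IsCompactObj C X)
    (I : ThickIdeal K) {V E : C} (hE : IsCompactObj C E)
    (hIH : ∀ Z ∈ I.carrier, ∀ f : F.obj Z ⟶ V, f = 0) :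
    ∀ Z ∈ I.carrier, ∀ f : F.obj Z ⟶ V ⊗ E, f = 0 := by
  intro Z hZ
  obtain ⟨hd⟩ := hC.compact_rigid_left E hE
  letI := hd
  obtain ⟨B₀, ⟨e₀⟩⟩ := (hF _).mpr (isCompact_of_pairing_left hC (ᘁE : C) E)
  have iso2 : F.obj Z ⊗ (ᘁE : C) ≅ F.obj (Z ⊗ B₀) :=
    tensorIso (Iso.refl _) e₀.symm ≪≫ Functor.Monoidal.μIso F Z B₀
  exact allZero_equiv ((tensorRightHomEquiv (F.obj Z) (ᘁE : C) E V).symm.trans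
    (iso2.homCongr (Iso.refl V))) (hIH _ (I.tensor_right_mem Z B₀ hZ))

/-- Left tensor step. -/
lemma step_tensorLeft (hC : IsCptGenMDC C) (hF : ∀ X : C, F.essImage X ↔ IsCompactObj C X)
    (I : ThickIdeal K) {V E : C} (hE : IsCompactObj C E)
    (hIH : ∀ Z ∈ I.carrier, ∀ f : F.obj Z ⟶ V, f = 0) :
    ∀ Z ∈ I.carrier, ∀ f : F.obj Z ⟶ E ⊗ V, f = 0 := by
  intro Z hZ
  obtain ⟨hd⟩ := hC.compact_rigid_right E hE
  letI := hd
  obtain ⟨B₀, ⟨e₀⟩⟩ := (hF _).mpr (isCompact_of_pairing_right hC E (Eᘁ))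
  have iso2 : ((Eᘁ : C)) ⊗ F.obj Z ≅ F.obj (B₀ ⊗ Z) :=
    tensorIso e₀.symm (Iso.refl _) ≪≫ Functor.Monoidal.μIso F B₀ Z
  exact allZero_equiv ((tensorLeftHomEquiv (F.obj Z) E (Eᘁ) V).symm.trans
    (iso2.homCongr (Iso.refl V))) (hIH _ (I.tensor_left_mem Z B₀ hZ))

/-- The class of "good targets": objects of the form `V₁ ⊗ V₂` with `Vᵢ` orthogonal to
`Iᵢ`, closed under shifts and under tensoring by compact objects on either side. -/
inductive QSet (I₁ I₂ : ThickIdeal K) : C → Prop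
  | base (V₁ V₂ : C) (h₁ : ∀ Z ∈ I₁.carrier, ∀ f : F.obj Z ⟶ V₁, f = 0)
      (h₂ : ∀ Z ∈ I₂.carrier, ∀ f : F.obj Z ⟶ V₂, f = 0) : QSet I₁ I₂ (V₁ ⊗ V₂)
  | shift (V : C) (n : ℤ) : QSet I₁ I₂ V → QSet I₁ I₂ ((V⟦n⟧ : C))
  | tensorRight (V E : C) (hE : IsCompactObj C E) : QSet I₁ I₂ V → QSet I₁ I₂ (V ⊗ E)
  | tensorLeft (V E : C) (hE : IsCompactObj C E) : QSet I₁ I₂ V → QSet I₁ I₂ (E ⊗ V)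

/-- Maps from the two ideals into any good target vanish. -/
lemma qset_allZero (hC : IsCptGenMDC C) (hF : ∀ X : C, F.essImage X ↔ IsCompactObj C X)
    {I₁ I₂ : ThickIdeal K} {V : C} (hV : QSet F I₁ I₂ V) :
    (∀ Z ∈ I₁.carrier, ∀ f : F.obj Z ⟶ V, f = 0) ∧
      (∀ Z ∈ I₂.carrier, ∀ f : F.obj Z ⟶ V, f = 0) := by
  induction hV with
  | base V₁ V₂ h₁ h₂ => exact ⟨base_left F hC hF I₁ h₁ V₂, base_right F hC hF I₂ h₂ V₁⟩
  | shift V n _ ih => exact ⟨step_shift F I₁ n ih.1, step_shift F I₂ n ih.2⟩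
  | tensorRight V E hE _ ih =>
      exact ⟨step_tensorRight F hC hF I₁ hE ih.1, step_tensorRight F hC hF I₂ hE ih.2⟩
  | tensorLeft V E hE _ ih =>
      exact ⟨step_tensorLeft F hC hF I₁ hE ih.1, step_tensorLeft F hC hF I₂ hE ih.2⟩

/-- The thick ideal of objects all of whose maps into every good target vanish. -/
def bigIdeal (hC : IsCptGenMDC C) (hF : ∀ X : C, F.essImage X ↔ IsCompactObj C X)
    (I₁ I₂ : ThickIdeal K) : ThickIdeal K where
  carrier := {Z : K | ∀ V : C, QSet F I₁ I₂ V → ∀ f : F.obj Z ⟶ V, f = 0}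
  zero_mem := fun V _ f => (F.map_isZero (isZero_zero K)).eq_of_src f 0
  iso_closed := by
    intro A B e hA V hQ f
    have h := hA V hQ (F.map e.hom ≫ f)
    calc f = F.map e.inv ≫ (F.map e.hom ≫ f) := by
          rw [← Category.assoc, ← F.map_comp, e.inv_hom_id, F.map_id, Category.id_comp]
    _ = 0 := by rw [h, comp_zero]
  shift_mem := by
    intro Z n hZ V hQ
    have e1 : (F.obj (Z⟦n⟧) ⟶ V) ≃ (((F.obj Z)⟦n⟧ : C) ⟶ V) :=
      Iso.homCongr ((F.commShiftIso n).app Z) (Iso.refl V)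
    have e2 : (((F.obj Z)⟦n⟧ : C) ⟶ V) ≃ (F.obj Z ⟶ (V⟦-n⟧ : C)) :=
      (shiftEquiv' C n (-n) (add_neg_cancel n)).toAdjunction.homEquiv (F.obj Z) V
    exact allZero_equiv (e1.trans e2) (hZ _ (QSet.shift V (-n) hQ))
  ext₂ := by
    intro T hT h1 h3 V hQ f
    obtain ⟨g, hg⟩ := Triangle.yoneda_exact₂ (F.mapTriangle.obj T)
      (F.map_distinguished T hT) f (h1 V hQ _)
    rw [hg, h3 V hQ g]
    exact comp_zero
  summand_mem := by
    intro A X s r hsr hX V hQ f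
    have h0 : F.map r ≫ f = 0 := hX V hQ _
    have h1 : F.map s ≫ F.map r = 𝟙 _ := by rw [← F.map_comp, hsr, F.map_id]
    calc f = (F.map s ≫ F.map r) ≫ f := by rw [h1, Category.id_comp]
    _ = F.map s ≫ (F.map r ≫ f) := by rw [Category.assoc]
    _ = 0 := by rw [h0, comp_zero]
  tensor_right_mem := by
    intro Z B hZ V hQ
    obtain ⟨hd⟩ := hC.compact_rigid_right (F.obj B) ((hF _).mp (F.obj_mem_essImage B))
    letI := hd
    exact allZero_equiv ((Iso.homCongr (Functor.Monoidal.μIso F Z B) (Iso.refl V)).symm.trans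
      (tensorRightHomEquiv (F.obj Z) (F.obj B) ((F.obj B)ᘁ) V))
      (hZ _ (QSet.tensorRight V _ (isCompact_of_pairing_right hC (F.obj B) _) hQ))
  tensor_left_mem := by
    intro Z B hZ V hQ
    obtain ⟨hd⟩ := hC.compact_rigid_left (F.obj B) ((hF _).mp (F.obj_mem_essImage B))
    letI := hd
    exact allZero_equiv ((Iso.homCongr (Functor.Monoidal.μIso F B Z) (Iso.refl V)).symm.trans
      (tensorLeftHomEquiv (F.obj Z) (ᘁ(F.obj B) : C) (F.obj B) V))
      (hZ _ (QSet.tensorLeft V _ (isCompact_of_pairing_left hC _ (F.obj B)) hQ))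

end Proof4Aux

/-- (a) For thick ideals `I₁, I₂` of the compact part `K` and objects `A, B` of `K`,
`L_{I₁}(A) ⊗ L_{I₂}(B)` lies in `⟨I₁, I₂⟩^⊥`; (b) if `I₁` and `I₂` are coprime, then
`L_{I₁}(A) ⊗ L_{I₂}(B) ≅ 0` for all objects `A, B` of the big category. -/
theorem statement4
    (hC : IsCptGenMDC C) (hF : ∀ X : C, F.essImage X ↔ IsCompactObj C X)
    (I₁ I₂ : ThickIdeal K)
    (LD₁ : LocalizationData C (F.obj '' I₁.carrier))
    (LD₂ : LocalizationData C (F.obj '' I₂.carrier)) :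
    (∀ A B : K, ∀ Z ∈ (thickIdealGenerated K (I₁.carrier ∪ I₂.carrier)).carrier,
      ∀ f : F.obj Z ⟶ LD₁.L (F.obj A) ⊗ LD₂.L (F.obj B), f = 0) ∧
    (Coprime K I₁ I₂ → ∀ A B : C, IsZero (LD₁.L A ⊗ LD₂.L B)) := by
  have hsub : I₁.carrier ∪ I₂.carrier ⊆ (bigIdeal F hC hF I₁ I₂).carrier := by
    rintro z (hz | hz)
    · exact fun V hQ => (qset_allZero F hC hF hQ).1 z hz
    · exact fun V hQ => (qset_allZero F hC hF hQ).2 z hz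
  have hQ : ∀ A B : C, QSet F I₁ I₂ (LD₁.L A ⊗ LD₂.L B) := fun A B =>
    QSet.base _ _ (fun Z' hZ' g => LD₁.L_mem A (F.obj Z') (fun L hL => hL ⟨Z', hZ', rfl⟩) g)
      (fun Z' hZ' g => LD₂.L_mem B (F.obj Z') (fun L hL => hL ⟨Z', hZ', rfl⟩) g)
  constructor
  · intro A B Z hZ f
    exact hZ (bigIdeal F hC hF I₁ I₂) hsub _ (hQ (F.obj A) (F.obj B)) f
  · intro hcop A B
    apply isZero_of_allZero F hC hF
    intro B' f
    have hB' : B' ∈ (thickIdealGenerated K (I₁.carrier ∪ I₂.carrier)).carrier := by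
      have : (thickIdealGenerated K (I₁.carrier ∪ I₂.carrier)).carrier = Set.univ := hcop
      rw [this]; trivial
    exact hB' (bigIdeal F hC hF I₁ I₂) hsub _ (hQ A B) f

end NVY
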